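/- For any ν ∈ V, any τ ∈ W and any β ∈ Φ⁺, set κ = s_βτ and B = {γ ∈ Φ⁺ : s_β(γ) ∈ −Φ⁺}. Then Σ_{γ∈Φ⁺} ⟨κν, γ∨⟩ − Σ_{γ∈Φ⁺} ⟨τν, γ∨⟩ = 2·( Σ_{γ∈B, ⟨κν,γ∨⟩ ≥ 0} ⟨κν, γ∨⟩ − Σ_{γ∈B, ⟨τν,γ∨⟩ ≥ 0} ⟨τν, γ∨⟩ ). (This is the reduction, used in the paper's LS-gallery dimension computation, of the difference of ρ-pairings ⟨κν − τν, 2ρ∨⟩ to sums over the inversion set B of s_β.) -/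

import Mathlib

open scoped RealInnerProductSpace

variable {V : Type*} [NormedAddCommGroup V] [InnerProductSpace ℝ V] [FiniteDimensional ℝ V]

/-- The coroot `γ∨ = 2γ/(γ,γ)` of a vector `γ`. -/
noncomputable def coroot (γ : V) : V := (2 / ⟪γ, γ⟫) • γ

/-- The orthogonal reflection `s_γ` fixing the hyperplane orthogonal to `γ`. -/
noncomputable def sRefl (γ : V) : V ≃ₗᵢ[ℝ] V := Submodule.reflection ((ℝ ∙ γ)ᗮ)

/-- The Weyl group generated by the reflections along the roots in `Φ`. -/
noncomputable def weylGroup (Φ : Finset V) : Subgroup (V ≃ₗᵢ[ℝ] V) :=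
  Subgroup.closure {g | ∃ γ ∈ Φ, g = sRefl γ}

/-- Word length with respect to the simple reflections `s_{α_1}, …, s_{α_n}`. -/
noncomputable def lengthW {n : ℕ} (α : Fin n → V) (w : V ≃ₗᵢ[ℝ] V) : ℕ :=
  sInf {m | ∃ f : Fin m → Fin n, (List.ofFn fun j => sRefl (α (f j))).prod = w}

/-- The Bruhat order: generated by `u < s_γ * u` for positive roots `γ` with `ℓ(u) < ℓ(s_γ u)`. -/
def bruhatLE {n : ℕ} (pos : Finset V) (α : Fin n → V) (u v : V ≃ₗᵢ[ℝ] V) : Prop :=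
  Relation.ReflTransGen
    (fun a b => ∃ γ ∈ pos, b = sRefl γ * a ∧ lengthW α a < lengthW α b) u v

/-- The maximal standard parabolic subgroup generated by the `s_{α_j}`, `j ≠ k`. -/
noncomputable def maxParabolic {n : ℕ} (α : Fin n → V) (k : Fin n) : Subgroup (V ≃ₗᵢ[ℝ] V) :=
  Subgroup.closure {g | ∃ j : Fin n, j ≠ k ∧ g = sRefl (α j)}

attribute [local instance] Classical.propDecidable

lemma sRefl_sRefl (β x : V) : sRefl β (sRefl β x) = x := by
  simp [sRefl]

lemma inner_sRefl_left (β x y : V) : ⟪sRefl β x, y⟫ = ⟪x, sRefl β y⟫ := by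
  have h := (sRefl β).inner_map_map x (sRefl β y)
  rwa [sRefl_sRefl] at h

lemma coroot_sRefl (β γ : V) : coroot (sRefl β γ) = sRefl β (coroot γ) := by
  unfold coroot
  rw [(sRefl β).inner_map_map, map_smul]

lemma coroot_neg (γ : V) : coroot (-γ) = -coroot γ := by
  unfold coroot
  rw [inner_neg_neg, smul_neg]

/-- For any `ν`, `τ ∈ W`, `β ∈ Φ⁺` and `κ = s_βτ`:
`Σ_{γ∈Φ⁺} ⟨κν, γ∨⟩ − Σ_{γ∈Φ⁺} ⟨τν, γ∨⟩
  = 2·(Σ_{γ∈B, ⟨κν,γ∨⟩≥0} ⟨κν, γ∨⟩ − Σ_{γ∈B, ⟨τν,γ∨⟩≥0} ⟨τν, γ∨⟩)`,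
where `B = {γ ∈ Φ⁺ : s_β(γ) ∈ −Φ⁺}` is the inversion set of `s_β`. -/
theorem statement4 {V : Type*} [NormedAddCommGroup V] [InnerProductSpace ℝ V]
    [FiniteDimensional ℝ V] {n : ℕ}
    (Φ pos : Finset V) (α : Fin n → V)
    -- `Φ` is a finite reduced crystallographic root system spanning `V`:
    (hΦne : ∀ γ ∈ Φ, γ ≠ (0 : V))
    (hspan : Submodule.span ℝ (Φ : Set V) = ⊤)
    (hreflmem : ∀ γ ∈ Φ, ∀ δ ∈ Φ, sRefl γ δ ∈ Φ)
    (hcrys : ∀ γ ∈ Φ, ∀ δ ∈ Φ, ∃ m : ℤ, ⟪γ, coroot δ⟫ = (m : ℝ))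
    (hreduced : ∀ γ ∈ Φ, ∀ t : ℝ, t • γ ∈ Φ → t = 1 ∨ t = -1)
    -- `pos` is a system of positive roots with simple roots `α_1, …, α_n`:
    (hpos : pos ⊆ Φ)
    (hsplit : ∀ γ ∈ Φ, γ ∈ pos ∨ -γ ∈ pos)
    (hnotboth : ∀ γ ∈ pos, -γ ∉ pos)
    (hsimple : ∀ i, α i ∈ pos)
    (hsimplespan : ∀ γ ∈ pos, ∃ c : Fin n → ℝ, (∀ i, 0 ≤ c i) ∧ γ = ∑ i, c i • α i)
    -- arbitrary `ν ∈ V`, `τ ∈ W` and `β ∈ Φ⁺`: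
    (ν : V) (τ : V ≃ₗᵢ[ℝ] V) (hτ : τ ∈ weylGroup Φ)
    (β : V) (hβ : β ∈ pos) :
    (∑ γ ∈ pos, ⟪(sRefl β * τ) ν, coroot γ⟫) - (∑ γ ∈ pos, ⟪τ ν, coroot γ⟫) =
      2 * ((∑ γ ∈ pos.filter
              (fun γ => -(sRefl β γ) ∈ pos ∧ 0 ≤ ⟪(sRefl β * τ) ν, coroot γ⟫),
              ⟪(sRefl β * τ) ν, coroot γ⟫) -
           (∑ γ ∈ pos.filter
              (fun γ => -(sRefl β γ) ∈ pos ∧ 0 ≤ ⟪τ ν, coroot γ⟫),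
              ⟪τ ν, coroot γ⟫)) := by
  classical
  set f : V → ℝ := fun γ => ⟪τ ν, coroot γ⟫ with hf
  have hkey : ∀ γ : V, ⟪(sRefl β * τ) ν, coroot γ⟫ = f (sRefl β γ) := by
    intro γ
    have : (sRefl β * τ) ν = sRefl β (τ ν) := rfl
    rw [this, inner_sRefl_left, ← coroot_sRefl]
  have hneg : ∀ γ : V, f (sRefl β γ) = - f (-(sRefl β γ)) := by
    intro γ; simp [hf, coroot_neg, inner_neg_right]
  set p : V → Prop := fun γ => -(sRefl β γ) ∈ pos with hp
  -- membership facts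
  have hΦs : ∀ γ ∈ pos, sRefl β γ ∈ Φ := fun γ hγ => hreflmem β (hpos hβ) γ (hpos hγ)
  have hdich : ∀ γ ∈ pos, ¬ p γ → sRefl β γ ∈ pos := by
    intro γ hγ h
    rcases hsplit _ (hΦs γ hγ) with h' | h'
    · exact h'
    · exact absurd h' h
  have hemem : ∀ γ ∈ pos, p γ → (-(sRefl β γ) ∈ pos ∧ p (-(sRefl β γ))) := by
    intro γ hγ h
    refine ⟨h, ?_⟩
    show -(sRefl β (-(sRefl β γ))) ∈ pos
    rw [map_neg, sRefl_sRefl, neg_neg]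
    exact hγ
  have heinv : ∀ γ : V, -(sRefl β (-(sRefl β γ))) = γ := by
    intro γ; rw [map_neg, sRefl_sRefl, neg_neg]
  -- Step A1 : sum over the complement of the inversion set is unchanged
  have hA1 : ∑ γ ∈ pos.filter (fun γ => ¬ p γ), f (sRefl β γ)
      = ∑ γ ∈ pos.filter (fun γ => ¬ p γ), f γ := by
    refine Finset.sum_nbij' (fun γ => sRefl β γ) (fun γ => sRefl β γ) ?_ ?_ ?_ ?_ ?_
    · intro γ hγ
      rw [Finset.mem_filter] at hγ ⊢
      refine ⟨hdich γ hγ.1 hγ.2, ?_⟩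
      show ¬ (-(sRefl β (sRefl β γ)) ∈ pos)
      rw [sRefl_sRefl]
      exact hnotboth γ hγ.1
    · intro γ hγ
      rw [Finset.mem_filter] at hγ ⊢
      refine ⟨hdich γ hγ.1 hγ.2, ?_⟩
      show ¬ (-(sRefl β (sRefl β γ)) ∈ pos)
      rw [sRefl_sRefl]
      exact hnotboth γ hγ.1
    · intro γ _; exact sRefl_sRefl β γ
    · intro γ _; exact sRefl_sRefl β γ
    · intro γ _; rfl
  -- Step A2 : sum over the inversion set is negated
  have hA2 : ∑ γ ∈ pos.filter p, f (sRefl β γ) = - ∑ γ ∈ pos.filter p, f γ := by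
    rw [← Finset.sum_neg_distrib]
    refine Finset.sum_nbij' (fun γ => -(sRefl β γ)) (fun γ => -(sRefl β γ)) ?_ ?_ ?_ ?_ ?_
    · intro γ hγ
      rw [Finset.mem_filter] at hγ ⊢
      exact hemem γ hγ.1 hγ.2
    · intro γ hγ
      rw [Finset.mem_filter] at hγ ⊢
      exact hemem γ hγ.1 hγ.2
    · intro γ _; exact heinv γ
    · intro γ _; exact heinv γ
    · intro γ _; exact hneg γ
  have hsplitpos : ∀ g : V → ℝ,
      ∑ γ ∈ pos.filter p, g γ + ∑ γ ∈ pos.filter (fun γ => ¬ p γ), g γ = ∑ γ ∈ pos, g γ :=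
    fun g => Finset.sum_filter_add_sum_filter_not pos p g
  have hA : ∑ γ ∈ pos, f (sRefl β γ) - ∑ γ ∈ pos, f γ = - 2 * ∑ γ ∈ pos.filter p, f γ := by
    have h1 := hsplitpos (fun γ => f (sRefl β γ))
    have h2 := hsplitpos f
    rw [← h1, ← h2, hA2, hA1]; ring
  -- Step B: the filtered "kappa"-sum turns into the sum over nonpositive "tau"-terms
  have hB : ∑ γ ∈ pos.filter (fun γ => p γ ∧ 0 ≤ f (sRefl β γ)), f (sRefl β γ)
      = - ∑ γ ∈ pos.filter (fun γ => p γ ∧ f γ ≤ 0), f γ := by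
    rw [← Finset.sum_neg_distrib]
    refine Finset.sum_nbij' (fun γ => -(sRefl β γ)) (fun γ => -(sRefl β γ)) ?_ ?_ ?_ ?_ ?_
    · intro γ hγ
      rw [Finset.mem_filter] at hγ ⊢
      obtain ⟨h1, h2, h3⟩ := hγ
      refine ⟨(hemem γ h1 h2).1, (hemem γ h1 h2).2, ?_⟩
      have := hneg γ
      linarith [hneg γ]
    · intro γ hγ
      rw [Finset.mem_filter] at hγ ⊢
      obtain ⟨h1, h2, h3⟩ := hγ
      refine ⟨(hemem γ h1 h2).1, (hemem γ h1 h2).2, ?_⟩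
      have h4 := hneg (-(sRefl β γ))
      rw [heinv γ] at h4
      linarith
    · intro γ _; exact heinv γ
    · intro γ _; exact heinv γ
    · intro γ _; exact hneg γ
  -- Step C: splitting the inversion-set sum by sign
  have hle : ∑ γ ∈ pos.filter (fun γ => p γ ∧ f γ ≤ 0), f γ
      = ∑ γ ∈ pos.filter (fun γ => p γ ∧ f γ < 0), f γ := by
    symm
    refine Finset.sum_subset ?_ ?_
    · intro γ hγ
      rw [Finset.mem_filter] at hγ ⊢
      exact ⟨hγ.1, hγ.2.1, le_of_lt hγ.2.2⟩
    · intro γ hγ hγ'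
      rw [Finset.mem_filter] at hγ hγ'
      by_contra h
      exact hγ' ⟨hγ.1, hγ.2.1, lt_of_le_of_ne hγ.2.2 h⟩
  have hC : ∑ γ ∈ pos.filter (fun γ => p γ ∧ f γ ≤ 0), f γ
      + ∑ γ ∈ pos.filter (fun γ => p γ ∧ 0 ≤ f γ), f γ
      = ∑ γ ∈ pos.filter p, f γ := by
    rw [hle]
    have h1 : pos.filter (fun γ => p γ ∧ f γ < 0)
        = (pos.filter p).filter (fun γ => ¬ 0 ≤ f γ) := by
      rw [Finset.filter_filter]
      apply Finset.filter_congr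
      intro γ _
      simp [not_le]
    have h2 : pos.filter (fun γ => p γ ∧ 0 ≤ f γ)
        = (pos.filter p).filter (fun γ => 0 ≤ f γ) := by
      rw [Finset.filter_filter]
    rw [h1, h2, add_comm]
    exact Finset.sum_filter_add_sum_filter_not _ _ _
  -- Put everything together
  simp only [hkey]
  rw [hA, hB]
  linarith [hC]
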